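/- arXiv:2407.00479 — 2 statements merged into one kernel-verified Lean document; each statement's English description precedes it below -/
import Mathlib

section
/- Let M be a maximally monotone subset of B such that for every x* ∈ E* there exists x ∈ E with (x,x*) ∈ M. Then M is of type (NI). If, in addition, L(M) is a maximally monotone subset of B*, then M^♯ = L(M). -/
open NormedSpace

noncomputable section

variable (E : Type*) [NormedAddCommGroup E] [NormedSpace ℝ E]

/-- `B = E × E*`. -/
abbrev BSp := E × StrongDual ℝ E

/-- `B* = E* × E**`. -/
abbrev BStar := StrongDual ℝ E × StrongDual ℝ (StrongDual ℝ E)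

/-- `q(x, x*) = ⟨x, x*⟩`. -/
def qB (b : BSp E) : ℝ := b.2 b.1

/-- `r(b) = ½‖b‖² + q(b)`, where `‖(x,x*)‖² = ‖x‖² + ‖x*‖²`. -/
def rB (b : BSp E) : ℝ := (‖b.1‖ ^ 2 + ‖b.2‖ ^ 2) / 2 + qB E b

/-- `q̃(y*, y**) = ⟨y*, y**⟩`. -/
def qS (p : BStar E) : ℝ := p.2 p.1

/-- `r̃(b*) = ½‖b*‖² + q̃(b*)`. -/
def rS (p : BStar E) : ℝ := (‖p.1‖ ^ 2 + ‖p.2‖ ^ 2) / 2 + qS E p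

/-- The isometry `L(y, y*) = (y*, ŷ)`. -/
def LMap (b : BSp E) : BStar E := (b.2, inclusionInDoubleDual ℝ E b.1)

/-- A subset of `B` is monotone. -/
def IsMonot (A : Set (BSp E)) : Prop := ∀ d ∈ A, ∀ e ∈ A, 0 ≤ qB E (d - e)

/-- A subset of `B` is maximally monotone. -/
def IsMaxMonot (A : Set (BSp E)) : Prop :=
  IsMonot E A ∧ ∀ A' : Set (BSp E), IsMonot E A' → A ⊆ A' → A' = A

/-- A subset of `B*` is monotone. -/
def IsMonotStar (N : Set (BStar E)) : Prop := ∀ d ∈ N, ∀ e ∈ N, 0 ≤ qS E (d - e)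

/-- A subset of `B*` is maximally monotone. -/
def IsMaxMonotStar (N : Set (BStar E)) : Prop :=
  IsMonotStar E N ∧ ∀ N' : Set (BStar E), IsMonotStar E N' → N ⊆ N' → N' = N

/-- `A` is quasidense: `inf_{a ∈ A} r(a - b) = 0` for every `b ∈ B`. -/
def Quasidense (A : Set (BSp E)) : Prop :=
  ∀ b : BSp E, (⨅ a ∈ A, (rB E (a - b) : EReal)) = 0

/-- `P_M(b) = −inf_{m ∈ M} q(m − b)`, an extended real. -/
def PFn (M : Set (BSp E)) (b : BSp E) : EReal := -(⨅ m ∈ M, (qB E (m - b) : EReal))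

/-- `F_M(b*) = −inf_{b ∈ B} [P_M(b) + q̃(b* − Lb)]`. -/
def FFn (M : Set (BSp E)) (p : BStar E) : EReal :=
  -(⨅ b : BSp E, (PFn E M b + (qS E (p - LMap E b) : EReal)))

/-- `G_M(b*) = −inf_{m ∈ M} q̃(Lm − b*)`. -/
def GFn (M : Set (BSp E)) (p : BStar E) : EReal :=
  -(⨅ m ∈ M, (qS E (LMap E m - p) : EReal))

/-- The Gossez extension `M^♯ = {b* : G_M(b*) ≤ 0}`. -/
def Sharp (M : Set (BSp E)) : Set (BStar E) := {p | GFn E M p ≤ 0}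

/-- `M` is of type (NI): `G_M ≥ 0` on `B*`. -/
def TypeNI (M : Set (BSp E)) : Prop := ∀ p : BStar E, 0 ≤ GFn E M p

variable [CompleteSpace E] [Nontrivial E]

lemma qS_L_sub (d e : BSp E) : qS E (LMap E d - LMap E e) = qB E (d - e) := by
  simp [qS, qB, LMap, dual_def]
  ring

lemma qS_neg (v : BStar E) : qS E (-v) = qS E v := by
  simp [qS]

/-- If `M` is maximally monotone and surjective, then `M` is of type (NI);
if moreover `L(M)` is maximally monotone in `B*`, then `M^♯ = L(M)`. -/
theorem typeNI_of_surjective (M : Set (BSp E)) (hM : IsMaxMonot E M)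
    (hsurj : ∀ xstar : StrongDual ℝ E, ∃ x : E, (x, xstar) ∈ M) :
    TypeNI E M ∧ (IsMaxMonotStar E (LMap E '' M) → Sharp E M = LMap E '' M) := by
  have key : ∀ p : BStar E, 0 ≤ GFn E M p := by
    intro p
    rw [GFn, show (0:EReal) = -0 from neg_zero.symm, EReal.neg_le_neg_iff]
    obtain ⟨x, hx⟩ := hsurj p.1
    refine iInf₂_le_of_le (x, p.1) hx ?_
    have : qS E (LMap E (x, p.1) - p) = 0 := by
      simp [qS, LMap]
    rw [this]; exact le_refl _
  refine ⟨key, fun hmax => ?_⟩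
  apply Set.Subset.antisymm
  · -- Sharp ⊆ L(M)
    intro p hp
    have h0 : (0 : EReal) ≤ ⨅ m ∈ M, (qS E (LMap E m - p) : EReal) := by
      have := hp
      rwa [Sharp, Set.mem_setOf_eq, GFn, show (0:EReal) = -0 from neg_zero.symm, EReal.neg_le_neg_iff] at this
    have hterm : ∀ m ∈ M, 0 ≤ qS E (LMap E m - p) := by
      intro m hm
      have := le_trans h0 (iInf₂_le m hm)
      exact_mod_cast this
    have hmono : IsMonotStar E (insert p (LMap E '' M)) := by
      rintro d hd e he
      rcases hd with rfl | ⟨m, hm, rfl⟩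
      · rcases he with rfl | ⟨m, hm, rfl⟩
        · simp [qS]
        · have : d - LMap E m = -(LMap E m - d) := by abel
          rw [this, qS_neg]
          exact hterm m hm
      · rcases he with rfl | ⟨m', hm', rfl⟩
        · exact hterm m hm
        · rw [qS_L_sub]
          exact hM.1 m hm m' hm'
    have := hmax.2 _ hmono (Set.subset_insert _ _)
    rw [← this]
    exact Set.mem_insert _ _
  · -- L(M) ⊆ Sharp
    rintro _ ⟨m0, hm0, rfl⟩
    rw [Sharp, Set.mem_setOf_eq, GFn, show (0:EReal) = -0 from neg_zero.symm, EReal.neg_le_neg_iff]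
    refine le_iInf₂ fun m hm => ?_
    rw [qS_L_sub]
    exact_mod_cast hM.1 m hm m0 hm0
end
end

section
/- Let E be a reflexive real Banach space and M a maximally monotone subset of B. Then M is of type (NI), and M^♯ = L(M). -/
open NormedSpace

noncomputable section

variable (E : Type*) [NormedAddCommGroup E] [NormedSpace ℝ E]

variable [CompleteSpace E] [Nontrivial E]

lemma qB_neg (b : BSp E) : qB E (-b) = qB E b := by
  simp [qB]

lemma qS_LMap_sub (a b : BSp E) : qS E (LMap E a - LMap E b) = qB E (a - b) := by
  simp [qS, qB, LMap, inclusionInDoubleDual]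
  ring

/-- If `c ∉ M` and `M` is maximally monotone, there is `m ∈ M` with `q(m-c) < 0`. -/
lemma exists_neg_of_not_mem (M : Set (BSp E)) (hM : IsMaxMonot E M)
    (c : BSp E) (hc : c ∉ M) : ∃ m ∈ M, qB E (m - c) < 0 := by
  by_contra h
  push_neg at h
  have hmono : IsMonot E (insert c M) := by
    intro d hd e he
    rcases hd with rfl | hd <;> rcases he with rfl | he
    · simp [qB]
    · have hsym : qB E (d - e) = qB E (e - d) := by
        rw [← qB_neg E (e - d)]; congr 1; abel
      rw [hsym]; exact h e he
    · exact h d hd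
    · exact hM.1 d hd e he
  have := hM.2 (insert c M) hmono (Set.subset_insert _ _)
  exact hc (this ▸ Set.mem_insert c M)

lemma M_nonempty (M : Set (BSp E)) (hM : IsMaxMonot E M) : M.Nonempty := by
  by_contra h
  rw [Set.not_nonempty_iff_eq_empty] at h
  subst h
  have hmono : IsMonot E {(0 : BSp E)} := by
    intro d hd e he
    simp_all [qB]
  have := hM.2 {0} hmono (Set.empty_subset _)
  simp [Set.eq_empty_iff_forall_notMem] at this

lemma GFn_LMap (M : Set (BSp E)) (c : BSp E) :
    GFn E M (LMap E c) = -(⨅ m ∈ M, (qB E (m - c) : EReal)) := by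
  unfold GFn
  congr 1
  refine iInf_congr fun m => iInf_congr fun _ => ?_
  rw [qS_LMap_sub]

lemma LMap_surj (hrefl : Function.Surjective (inclusionInDoubleDual ℝ E)) :
    Function.Surjective (LMap E) := by
  intro p
  obtain ⟨x, hx⟩ := hrefl p.2
  exact ⟨(x, p.1), by simp [LMap, hx]⟩

/-- If `E` is reflexive and `M` is maximally monotone, then `M` is of
type (NI) and `M^♯ = L(M)`. -/
theorem typeNI_and_sharp_eq_image_of_reflexive
    (hrefl : Function.Surjective (inclusionInDoubleDual ℝ E))
    (M : Set (BSp E)) (hM : IsMaxMonot E M) :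
    TypeNI E M ∧ Sharp E M = LMap E '' M := by
  have key : ∀ c : BSp E, c ∈ M → GFn E M (LMap E c) = 0 := by
    intro c hc
    rw [GFn_LMap]
    have h1 : (⨅ m ∈ M, (qB E (m - c) : EReal)) ≤ 0 := by
      refine le_trans (iInf₂_le c hc) ?_
      simp [qB]
    have h2 : (0 : EReal) ≤ ⨅ m ∈ M, (qB E (m - c) : EReal) := by
      refine le_iInf₂ fun m hm => ?_
      exact_mod_cast hM.1 m hm c hc
    have : (⨅ m ∈ M, (qB E (m - c) : EReal)) = 0 := le_antisymm h1 h2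
    rw [this]; simp
  have keypos : ∀ c : BSp E, c ∉ M → 0 < GFn E M (LMap E c) := by
    intro c hc
    rw [GFn_LMap]
    obtain ⟨m, hm, hlt⟩ := exists_neg_of_not_mem E M hM c hc
    have h1 : (⨅ m ∈ M, (qB E (m - c) : EReal)) < 0 := by
      refine lt_of_le_of_lt (iInf₂_le m hm) ?_
      exact_mod_cast hlt
    rwa [← EReal.neg_lt_neg_iff, neg_zero] at h1
  constructor
  · intro p
    obtain ⟨c, rfl⟩ := LMap_surj E hrefl p
    by_cases hc : c ∈ M
    · rw [key c hc]
    · exact (keypos c hc).le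
  · ext p
    constructor
    · intro hp
      obtain ⟨c, rfl⟩ := LMap_surj E hrefl p
      by_cases hc : c ∈ M
      · exact ⟨c, hc, rfl⟩
      · exact absurd hp (not_le.mpr (keypos c hc))
    · rintro ⟨c, hc, rfl⟩
      exact le_of_eq (key c hc)
end
end
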